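/- (Fine's normal form theorem.) Let P be a finite set of propositional variables and d ≥ 0. For every modal formula φ ∈ L(P) with md(φ) ≤ d that is satisfiable for K, there exists a set S ⊆ F_P^d such that φ ↔ ⋁_{ψ∈S} ψ is valid for K. -/
import Mathlib


/-- Modal formulas in negation normal form, as in the paper:
φ ::= ⊥ | ⊤ | p | ¬p | φ∧φ | φ∨φ | □φ | ◇φ. -/
inductive Form : Type where
  | bot : Form
  | top : Form
  | pos : ℕ → Form
  | npos : ℕ → Form
  | and : Form → Form → Form
  | or : Form → Form → Form
  | box : Form → Form
  | dia : Form → Form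
deriving DecidableEq

namespace Form

/-- Negation, defined as usual (by De Morgan dualities). -/
def neg : Form → Form
  | bot => top
  | top => bot
  | pos p => npos p
  | npos p => pos p
  | and φ ψ => or φ.neg ψ.neg
  | or φ ψ => and φ.neg ψ.neg
  | box φ => dia φ.neg
  | dia φ => box φ.neg

/-- Implication φ → ψ, defined as usual. -/
def imp (φ ψ : Form) : Form := or φ.neg ψ

/-- Bi-implication φ ↔ ψ, defined as usual. -/
def biimp (φ ψ : Form) : Form := and (imp φ ψ) (imp ψ φ)

/-- P(φ): the set of propositional variables occurring in φ. -/
def vars : Form → Finset ℕ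
  | bot => ∅
  | top => ∅
  | pos p => {p}
  | npos p => {p}
  | and φ ψ => φ.vars ∪ ψ.vars
  | or φ ψ => φ.vars ∪ ψ.vars
  | box φ => φ.vars
  | dia φ => φ.vars

/-- Modal depth. -/
def md : Form → ℕ
  | bot => 0
  | top => 0
  | pos _ => 0
  | npos _ => 0
  | and φ ψ => max φ.md ψ.md
  | or φ ψ => max φ.md ψ.md
  | box φ => φ.md + 1
  | dia φ => φ.md + 1

/-- sub(φ): the set of subformulas of φ. -/
def subf : Form → Finset Form
  | bot => {bot}
  | top => {top}
  | pos p => {pos p}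
  | npos p => {npos p}
  | and φ ψ => insert (and φ ψ) (φ.subf ∪ ψ.subf)
  | or φ ψ => insert (or φ ψ) (φ.subf ∪ ψ.subf)
  | box φ => insert (box φ) φ.subf
  | dia φ => insert (dia φ) φ.subf

/-- s̄ub(φ) = sub(φ) ∪ {¬ψ : ψ ∈ sub(φ)}. -/
def subBar (φ : Form) : Finset Form := φ.subf ∪ φ.subf.image neg

/-- □^k φ : k nested boxes. -/
def boxIter : ℕ → Form → Form
  | 0, φ => φ
  | n + 1, φ => box (boxIter n φ)

def isDia : Form → Bool
  | dia _ => true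
  | _ => false

def isBox : Form → Bool
  | box _ => true
  | _ => false

end Form

/-- Big conjunction over a finite set of formulas (⋀∅ = ⊤). -/
noncomputable def bigAnd (s : Finset Form) : Form := s.toList.foldr Form.and Form.top

/-- Big disjunction over a finite set of formulas (⋁∅ = ⊥). -/
noncomputable def bigOr (s : Finset Form) : Form := s.toList.foldr Form.or Form.bot

/-- th(a) = ⋀ a. -/
noncomputable def th (a : Finset Form) : Form := bigAnd a

/-- A finite Kripke model: a nonempty finite set of states, an accessibility
relation and a valuation. -/
structure Model : Type 1 where
  W : Type
  nonempty : Nonempty W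
  finite : Finite W
  R : W → W → Prop
  V : W → Set ℕ

/-- Satisfaction M,w ⊨ φ. -/
def Model.sat (M : Model) : M.W → Form → Prop
  | _, .bot => False
  | _, .top => True
  | w, .pos p => p ∈ M.V w
  | w, .npos p => p ∉ M.V w
  | w, .and φ ψ => M.sat w φ ∧ M.sat w ψ
  | w, .or φ ψ => M.sat w φ ∨ M.sat w ψ
  | w, .box φ => ∀ v, M.R w v → M.sat v φ
  | w, .dia φ => ∃ v, M.R w v ∧ M.sat v φ

/-- The six base logics K, D, T, K4, KD4, S4. -/
inductive BaseLogic : Type where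
  | K | D | T | K4 | KD4 | S4
deriving DecidableEq

/-- A logic: a base logic, possibly extended by axiom 5. -/
structure Logic : Type where
  base : BaseLogic
  has5 : Bool
deriving DecidableEq

def Logic.K : Logic := ⟨.K, false⟩
def Logic.D : Logic := ⟨.D, false⟩
def Logic.T : Logic := ⟨.T, false⟩
def Logic.K4 : Logic := ⟨.K4, false⟩
def Logic.KD4 : Logic := ⟨.KD4, false⟩
def Logic.S4 : Logic := ⟨.S4, false⟩

/-- l + 5. -/
def BaseLogic.plus5 (b : BaseLogic) : Logic := ⟨b, true⟩

/-- M is a model for the logic l (frame conditions). -/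
def Model.IsFor (M : Model) (l : Logic) : Prop :=
  (match l.base with
    | .K => True
    | .D => ∀ w, ∃ v, M.R w v
    | .T => ∀ w, M.R w w
    | .K4 => ∀ a b c, M.R a b → M.R b c → M.R a c
    | .KD4 => (∀ w, ∃ v, M.R w v) ∧ (∀ a b c, M.R a b → M.R b c → M.R a c)
    | .S4 => (∀ w, M.R w w) ∧ (∀ a b c, M.R a b → M.R b c → M.R a c))
  ∧ (l.has5 = true → ∀ a b c, M.R a b → M.R a c → M.R b c)

/-- φ is satisfiable for l: satisfied at some state of some finite model for l. -/
def Satisfiable (l : Logic) (φ : Form) : Prop :=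
  ∃ M : Model, M.IsFor l ∧ ∃ w : M.W, M.sat w φ

/-- φ is valid for l: satisfied at every state of every finite model for l. -/
def Valid (l : Logic) (φ : Form) : Prop :=
  ∀ M : Model, M.IsFor l → ∀ w : M.W, M.sat w φ

/-- φ is complete for l: for every ψ ∈ L(P(φ)), φ→ψ or φ→¬ψ is valid for l. -/
def Complete (l : Logic) (φ : Form) : Prop :=
  ∀ ψ : Form, ψ.vars ⊆ φ.vars → (Valid l (φ.imp ψ) ∨ Valid l (φ.imp ψ.neg))

/-- Z is a bisimulation modulo P from M to M'. -/
def IsBisim (P : Set ℕ) (M M' : Model) (Z : M.W → M'.W → Prop) : Prop :=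
  (∃ s s', Z s s') ∧
  ∀ s s', Z s s' →
    (M.V s ∩ P = M'.V s' ∩ P) ∧
    (∀ t, M.R s t → ∃ t', M'.R s' t' ∧ Z t t') ∧
    (∀ t', M'.R s' t' → ∃ t, M.R s t ∧ Z t t')

/-- (M,a) ∼_P (M',a'). -/
def Bisimilar (P : Set ℕ) (M : Model) (a : M.W) (M' : Model) (a' : M'.W) : Prop :=
  ∃ Z, IsBisim P M M' Z ∧ Z a a'

/-- (M,a) ≡_P (M',a'): the two pointed models satisfy the same formulas of L(P). -/
def EquivP (P : Set ℕ) (M : Model) (a : M.W) (M' : Model) (a' : M'.W) : Prop :=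
  ∀ φ : Form, ↑φ.vars ⊆ P → (M.sat a φ ↔ M'.sat a' φ)

/-- (M,s) is flat (for base logic l, with axiom 5): the carrier is {s}∪W and
R = R1 ∪ R2 with R1 ⊆ {s}×W, R2 an equivalence relation on W, and s ∈ W if
l ∈ {T,S4}. -/
def Flat (l : BaseLogic) (M : Model) (s : M.W) : Prop :=
  ∃ W : Set M.W, (∀ w, w = s ∨ w ∈ W) ∧
    ∃ R1 R2 : M.W → M.W → Prop,
      (∀ x y, M.R x y ↔ (R1 x y ∨ R2 x y)) ∧
      (∀ x y, R1 x y → x = s ∧ y ∈ W) ∧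
      (∀ x y, R2 x y → x ∈ W ∧ y ∈ W) ∧
      (∀ x ∈ W, R2 x x) ∧
      (∀ x y, R2 x y → R2 y x) ∧
      (∀ x y z, R2 x y → R2 y z → R2 x z) ∧
      ((l = .T ∨ l = .S4) → s ∈ W)

/-- A maximal state for l with respect to φ: a maximally l-consistent subset
of s̄ub(φ). -/
def MaxState (l : Logic) (φ : Form) (a : Finset Form) : Prop :=
  a ⊆ φ.subBar ∧ Satisfiable l (th a) ∧ ∀ ψ ∈ φ.subf, ψ ∈ a ∨ ψ.neg ∈ a

/-- D(x) = {◇ψ : ◇ψ ∈ x}. -/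
def DSet (x : Finset Form) : Finset Form := x.filter (fun ψ => ψ.isDia = true)

/-- B(x) = {□ψ : □ψ ∈ x}. -/
def BSet (x : Finset Form) : Finset Form := x.filter (fun ψ => ψ.isBox = true)

/-- A view: a parent-state and a finite set of children-states. -/
structure View : Type where
  parent : Finset Form
  children : Finset (Finset Form)

/-- The view is with respect to φ: all its states are subsets of s̄ub(φ). -/
def View.WF (φ : Form) (S : View) : Prop :=
  S.parent ⊆ φ.subBar ∧ ∀ c ∈ S.children, c ⊆ φ.subBar

/-- A set of formulas is l-closed. -/
def LClosed (l : Logic) (P : Finset ℕ) (s : Finset Form) : Prop :=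
  (∀ φ1 φ2 : Form, Form.and φ1 φ2 ∈ s → φ1 ∈ s ∧ φ2 ∈ s) ∧
  (∀ φ1 φ2 : Form, Form.or φ1 φ2 ∈ s → φ1 ∈ s ∨ φ2 ∈ s) ∧
  ((l.base = .T ∨ l.base = .S4) → ∀ ψ : Form, Form.box ψ ∈ s → ψ ∈ s) ∧
  (∀ p ∈ P, Form.pos p ∈ s ∨ Form.npos p ∈ s)

/-- The view S is l-complete. -/
def ViewLComplete (l : Logic) (P : Finset ℕ) (S : View) : Prop :=
  LClosed l P S.parent ∧
  (∀ c ∈ S.children, LClosed l P c) ∧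
  (∀ ψ : Form, Form.dia ψ ∈ S.parent → ∃ c ∈ S.children, ψ ∈ c) ∧
  (∀ ψ : Form, Form.box ψ ∈ S.parent → ∀ c ∈ S.children, ψ ∈ c) ∧
  ((l.base = .K4 ∨ l.base = .KD4 ∨ l.base = .S4) →
    ∀ ψ : Form, Form.box ψ ∈ S.parent → ∀ c ∈ S.children, Form.box ψ ∈ c) ∧
  (l.base = .KD4 → S.children.Nonempty)

/-- The view S is consistent for l: every one of its states is consistent. -/
def ViewConsistent (l : Logic) (S : View) : Prop :=
  Satisfiable l (th S.parent) ∧ ∀ c ∈ S.children, Satisfiable l (th c)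

/-- d = max{md(th(c')) : c' ∈ C(S)}. -/
noncomputable def childDepth (S : View) : ℕ := S.children.sup (fun c => (th c).md)

/-- A K-maximal child-state: a maximally K-consistent subset of s̄ub_d(φ). -/
def KMaxChild (φ : Form) (d : ℕ) (c : Finset Form) : Prop :=
  c ⊆ φ.subBar.filter (fun ψ => ψ.md ≤ d) ∧
  Satisfiable Logic.K (th c) ∧
  ∀ ψ ∈ φ.subf, ψ.md ≤ d → (ψ ∈ c ∨ ψ.neg ∈ c)

/-- S' completes S (for logic l, with respect to φ). -/
def ViewCompletes (l : Logic) (φ : Form) (S' S : View) : Prop :=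
  ViewLComplete l φ.vars S' ∧
  S.parent ⊆ S'.parent ∧
  (∀ a ∈ S.children, ∃ a' ∈ S'.children, a ⊆ a') ∧
  (l.base = .K → ∀ a' ∈ S'.children, KMaxChild φ (childDepth S') a') ∧
  (l.base ≠ .K → ∀ a' ∈ S'.children, MaxState l φ a')

/-- The depth-0 normal form ⋀_{p∈S} p ∧ ⋀_{p∈P∖S} ¬p. -/
noncomputable def nf0 (P S : Finset ℕ) : Form :=
  Form.and (bigAnd (S.image Form.pos)) (bigAnd ((P \ S).image Form.npos))

/-- Fine's normal forms F_P^d. -/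
noncomputable def NF (P : Finset ℕ) : ℕ → Set Form
  | 0 => { χ | ∃ S ⊆ P, χ = nf0 P S }
  | d + 1 => { χ | ∃ S : Finset Form, ↑S ⊆ NF P d ∧ ∃ S0 ⊆ P,
      χ = Form.and (nf0 P S0)
            (Form.and (bigAnd (S.image Form.dia)) (Form.box (bigOr S))) }

/-- φ is complete up to its depth for l. -/
def CompleteUpToDepth (l : Logic) (φ : Form) : Prop :=
  ∀ ψ : Form, ψ.vars ⊆ φ.vars → ψ.md ≤ φ.md →
    (Valid l (φ.imp ψ) ∨ Valid l (φ.imp ψ.neg))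

section FineAux

attribute [local instance] Classical.propDecidable

lemma sat_and {M : Model} {w : M.W} {a b : Form} :
    M.sat w (Form.and a b) ↔ M.sat w a ∧ M.sat w b := Iff.rfl

lemma sat_or {M : Model} {w : M.W} {a b : Form} :
    M.sat w (Form.or a b) ↔ M.sat w a ∨ M.sat w b := Iff.rfl

lemma sat_box {M : Model} {w : M.W} {a : Form} :
    M.sat w (Form.box a) ↔ ∀ v, M.R w v → M.sat v a := Iff.rfl

lemma sat_dia {M : Model} {w : M.W} {a : Form} :
    M.sat w (Form.dia a) ↔ ∃ v, M.R w v ∧ M.sat v a := Iff.rfl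

lemma sat_foldr_and {M : Model} {w : M.W} (l : List Form) :
    M.sat w (l.foldr Form.and Form.top) ↔ ∀ ψ ∈ l, M.sat w ψ := by
  induction l with
  | nil => simp [Model.sat]
  | cons a l ih => simp [Model.sat, ih]

lemma sat_foldr_or {M : Model} {w : M.W} (l : List Form) :
    M.sat w (l.foldr Form.or Form.bot) ↔ ∃ ψ ∈ l, M.sat w ψ := by
  induction l with
  | nil => simp [Model.sat]
  | cons a l ih => simp [Model.sat, ih]

lemma sat_bigAnd {M : Model} {w : M.W} (s : Finset Form) :
    M.sat w (bigAnd s) ↔ ∀ ψ ∈ s, M.sat w ψ := by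
  rw [bigAnd, sat_foldr_and]
  simp

lemma sat_bigOr {M : Model} {w : M.W} (s : Finset Form) :
    M.sat w (bigOr s) ↔ ∃ ψ ∈ s, M.sat w ψ := by
  rw [bigOr, sat_foldr_or]
  simp

lemma sat_nf0 {M : Model} {w : M.W} {P S : Finset ℕ} :
    M.sat w (nf0 P S) ↔ (∀ p ∈ S, p ∈ M.V w) ∧ ∀ p ∈ P, p ∉ S → p ∉ M.V w := by
  rw [nf0, sat_and, sat_bigAnd, sat_bigAnd]
  constructor
  · rintro ⟨h1, h2⟩
    refine ⟨fun p hp => h1 _ (Finset.mem_image_of_mem _ hp), fun p hp hps => ?_⟩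
    exact h2 (Form.npos p) (Finset.mem_image_of_mem _ (Finset.mem_sdiff.2 ⟨hp, hps⟩))
  · rintro ⟨h1, h2⟩
    constructor
    · intro ψ hψ
      obtain ⟨p, hp, rfl⟩ := Finset.mem_image.1 hψ
      exact h1 p hp
    · intro ψ hψ
      obtain ⟨p, hp, rfl⟩ := Finset.mem_image.1 hψ
      obtain ⟨hp1, hp2⟩ := Finset.mem_sdiff.1 hp
      exact h2 p hp1 hp2

lemma sat_neg {M : Model} (φ : Form) : ∀ w, M.sat w φ.neg ↔ ¬ M.sat w φ := by
  induction φ with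
  | bot => intro w; simp [Form.neg, Model.sat]
  | top => intro w; simp [Form.neg, Model.sat]
  | pos p => intro w; simp [Form.neg, Model.sat]
  | npos p => intro w; simp [Form.neg, Model.sat]
  | and a b iha ihb => intro w; rw [Form.neg, sat_or, iha, ihb, sat_and]; tauto
  | or a b iha ihb => intro w; simp [Form.neg, sat_and, sat_or, iha, ihb, not_or]
  | box a ih => intro w; simp [Form.neg, sat_box, sat_dia, ih]
  | dia a ih => intro w; simp [Form.neg, sat_box, sat_dia, ih]

lemma model_isForK (M : Model) : M.IsFor Logic.K := by
  constructor
  · trivial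
  · intro h; simp [Logic.K] at h

/-- Successors of a world. -/
noncomputable def succs (M : Model) (w : M.W) : Finset M.W :=
  haveI := M.finite
  (Set.toFinite {v | M.R w v}).toFinset

lemma mem_succs {M : Model} {w v : M.W} : v ∈ succs M w ↔ M.R w v := by
  simp [succs]

/-- The canonical normal form of a pointed model at depth d. -/
noncomputable def formM (P : Finset ℕ) (M : Model) : ℕ → M.W → Form
  | 0, w => nf0 P (P.filter (fun p => p ∈ M.V w))
  | d + 1, w =>
      Form.and (nf0 P (P.filter (fun p => p ∈ M.V w)))
        (Form.and (bigAnd (((succs M w).image (formM P M d)).image Form.dia))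
          (Form.box (bigOr ((succs M w).image (formM P M d)))))

lemma formM_mem (P : Finset ℕ) (M : Model) : ∀ d w, formM P M d w ∈ NF P d := by
  intro d
  induction d with
  | zero =>
    intro w
    exact ⟨_, Finset.filter_subset _ _, rfl⟩
  | succ d ih =>
    intro w
    refine ⟨(succs M w).image (formM P M d), ?_, P.filter (fun p => p ∈ M.V w),
      Finset.filter_subset _ _, rfl⟩
    intro χ hχ
    simp only [Finset.coe_image, Set.mem_image, Finset.mem_coe] at hχ
    obtain ⟨v, _, rfl⟩ := hχ
    exact ih v

lemma formM_sat (P : Finset ℕ) (M : Model) : ∀ d w, M.sat w (formM P M d w) := by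
  intro d
  induction d with
  | zero =>
    intro w
    rw [formM, sat_nf0]
    constructor
    · intro p hp; exact (Finset.mem_filter.1 hp).2
    · intro p hp hps
      intro hv
      exact hps (Finset.mem_filter.2 ⟨hp, hv⟩)
  | succ d ih =>
    intro w
    rw [formM, sat_and, sat_and]
    refine ⟨?_, ?_, ?_⟩
    · rw [sat_nf0]
      constructor
      · intro p hp; exact (Finset.mem_filter.1 hp).2
      · intro p hp hps hv
        exact hps (Finset.mem_filter.2 ⟨hp, hv⟩)
    · rw [sat_bigAnd]
      intro ψ hψ
      obtain ⟨χ, hχ, rfl⟩ := Finset.mem_image.1 hψ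
      obtain ⟨v, hv, rfl⟩ := Finset.mem_image.1 hχ
      exact ⟨v, mem_succs.1 hv, ih v⟩
    · rw [sat_box]
      intro v hv
      rw [sat_bigOr]
      exact ⟨formM P M d v, Finset.mem_image_of_mem _ (mem_succs.2 hv), ih v⟩

lemma NF_finite (P : Finset ℕ) : ∀ d, (NF P d).Finite := by
  intro d
  induction d with
  | zero =>
    apply Set.Finite.subset (((P.powerset).finite_toSet).image (fun S => nf0 P S))
    rintro χ ⟨S, hS, rfl⟩
    exact ⟨S, by simpa using hS, rfl⟩
  | succ d ih =>
    apply Set.Finite.subset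
      ((((ih.toFinset.powerset).finite_toSet).prod ((P.powerset).finite_toSet)).image
        (fun pr : Finset Form × Finset ℕ =>
          Form.and (nf0 P pr.2)
            (Form.and (bigAnd (pr.1.image Form.dia)) (Form.box (bigOr pr.1)))))
    rintro χ ⟨S, hS, S0, hS0, rfl⟩
    refine ⟨(S, S0), ⟨?_, by simpa using hS0⟩, rfl⟩
    simp only [Finset.coe_powerset, Set.mem_setOf_eq, Finset.mem_coe, Finset.mem_powerset]
    intro x hx
    exact ih.mem_toFinset.2 (hS hx)

/-- Agreement: two pointed models satisfying the same depth-d normal form agree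
on all formulas over P of modal depth ≤ d. -/
lemma agree (P : Finset ℕ) : ∀ d, ∀ χ ∈ NF P d, ∀ (M : Model) (w : M.W) (M' : Model) (w' : M'.W),
    M.sat w χ → M'.sat w' χ → ∀ ψ : Form, ψ.vars ⊆ P → ψ.md ≤ d →
    (M.sat w ψ ↔ M'.sat w' ψ) := by
  intro d
  induction d with
  | zero =>
    rintro χ ⟨S0, hS0, rfl⟩ M w M' w' hw hw' ψ hv hd
    rw [sat_nf0] at hw hw'
    have hA : ∀ p ∈ P, (p ∈ M.V w ↔ p ∈ M'.V w') := by
      intro p hp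
      constructor
      · intro h
        by_cases hs : p ∈ S0
        · exact hw'.1 p hs
        · exact absurd h (hw.2 p hp hs)
      · intro h
        by_cases hs : p ∈ S0
        · exact hw.1 p hs
        · exact absurd h (hw'.2 p hp hs)
    clear hw hw'
    induction ψ with
    | bot => simp [Model.sat]
    | top => simp [Model.sat]
    | pos p => exact hA p (hv (by simp [Form.vars]))
    | npos p =>
      have := hA p (hv (by simp [Form.vars]))
      simp [Model.sat, this]
    | and a b iha ihb =>
      rw [Form.vars] at hv
      rw [Form.md] at hd
      rw [sat_and, sat_and]
      exact and_congr
        (iha (fun x hx => hv (Finset.mem_union_left _ hx)) (le_trans (le_max_left _ _) hd))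
        (ihb (fun x hx => hv (Finset.mem_union_right _ hx)) (le_trans (le_max_right _ _) hd))
    | or a b iha ihb =>
      rw [Form.vars] at hv
      rw [Form.md] at hd
      rw [sat_or, sat_or]
      exact or_congr
        (iha (fun x hx => hv (Finset.mem_union_left _ hx)) (le_trans (le_max_left _ _) hd))
        (ihb (fun x hx => hv (Finset.mem_union_right _ hx)) (le_trans (le_max_right _ _) hd))
    | box a ih => rw [Form.md] at hd; omega
    | dia a ih => rw [Form.md] at hd; omega
  | succ d ihd =>
    rintro χ ⟨S, hS, S0, hS0, rfl⟩ M w M' w' hw hw' ψ hv hd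
    rw [sat_and, sat_and] at hw hw'
    obtain ⟨hw0, hwD, hwB⟩ := hw
    obtain ⟨hw0', hwD', hwB'⟩ := hw'
    rw [sat_nf0] at hw0 hw0'
    have hA : ∀ p ∈ P, (p ∈ M.V w ↔ p ∈ M'.V w') := by
      intro p hp
      constructor
      · intro h
        by_cases hs : p ∈ S0
        · exact hw0'.1 p hs
        · exact absurd h (hw0.2 p hp hs)
      · intro h
        by_cases hs : p ∈ S0
        · exact hw0.1 p hs
        · exact absurd h (hw0'.2 p hp hs)
    have hB : ∀ χ' ∈ S, ∃ t, M.R w t ∧ M.sat t χ' := by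
      intro χ' hχ'
      have := (sat_bigAnd _).1 hwD (Form.dia χ') (Finset.mem_image_of_mem _ hχ')
      exact this
    have hB' : ∀ χ' ∈ S, ∃ t, M'.R w' t ∧ M'.sat t χ' := by
      intro χ' hχ'
      exact (sat_bigAnd _).1 hwD' (Form.dia χ') (Finset.mem_image_of_mem _ hχ')
    have hC : ∀ t, M.R w t → ∃ χ' ∈ S, M.sat t χ' := by
      intro t ht
      exact (sat_bigOr _).1 (hwB t ht)
    have hC' : ∀ t, M'.R w' t → ∃ χ' ∈ S, M'.sat t χ' := by
      intro t ht
      exact (sat_bigOr _).1 (hwB' t ht)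
    clear hw0 hw0' hwD hwD' hwB hwB'
    induction ψ with
    | bot => simp [Model.sat]
    | top => simp [Model.sat]
    | pos p => exact hA p (hv (by simp [Form.vars]))
    | npos p =>
      have := hA p (hv (by simp [Form.vars]))
      simp [Model.sat, this]
    | and a b iha ihb =>
      rw [Form.vars] at hv
      rw [Form.md] at hd
      rw [sat_and, sat_and]
      exact and_congr
        (iha (fun x hx => hv (Finset.mem_union_left _ hx)) (le_trans (le_max_left _ _) hd))
        (ihb (fun x hx => hv (Finset.mem_union_right _ hx)) (le_trans (le_max_right _ _) hd))
    | or a b iha ihb =>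
      rw [Form.vars] at hv
      rw [Form.md] at hd
      rw [sat_or, sat_or]
      exact or_congr
        (iha (fun x hx => hv (Finset.mem_union_left _ hx)) (le_trans (le_max_left _ _) hd))
        (ihb (fun x hx => hv (Finset.mem_union_right _ hx)) (le_trans (le_max_right _ _) hd))
    | box a ih =>
      rw [Form.vars] at hv
      rw [Form.md] at hd
      have hda : a.md ≤ d := by omega
      rw [sat_box, sat_box]
      constructor
      · intro h t' ht'
        obtain ⟨χ', hχ'S, hχ't'⟩ := hC' t' ht'
        obtain ⟨t, ht, hχ't⟩ := hB χ' hχ'S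
        exact (ihd χ' (hS hχ'S) M t M' t' hχ't hχ't' a hv hda).1 (h t ht)
      · intro h t ht
        obtain ⟨χ', hχ'S, hχ't⟩ := hC t ht
        obtain ⟨t', ht', hχ't'⟩ := hB' χ' hχ'S
        exact (ihd χ' (hS hχ'S) M t M' t' hχ't hχ't' a hv hda).2 (h t' ht')
    | dia a ih =>
      rw [Form.vars] at hv
      rw [Form.md] at hd
      have hda : a.md ≤ d := by omega
      rw [sat_dia, sat_dia]
      constructor
      · rintro ⟨t, ht, hta⟩
        obtain ⟨χ', hχ'S, hχ't⟩ := hC t ht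
        obtain ⟨t', ht', hχ't'⟩ := hB' χ' hχ'S
        exact ⟨t', ht', (ihd χ' (hS hχ'S) M t M' t' hχ't hχ't' a hv hda).1 hta⟩
      · rintro ⟨t', ht', hta'⟩
        obtain ⟨χ', hχ'S, hχ't'⟩ := hC' t' ht'
        obtain ⟨t, ht, hχ't⟩ := hB χ' hχ'S
        exact ⟨t, ht, (ihd χ' (hS hχ'S) M t M' t' hχ't hχ't' a hv hda).2 hta'⟩

end FineAux


/-- Fine's normal form theorem for K. -/
theorem stmt15 (P : Finset ℕ) (d : ℕ) (φ : Form)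
    (hv : φ.vars ⊆ P) (hd : φ.md ≤ d) (hsat : Satisfiable Logic.K φ) :
    ∃ S : Finset Form, ↑S ⊆ NF P d ∧ Valid Logic.K (φ.biimp (bigOr S)) := by
  classical
  refine ⟨(NF_finite P d).toFinset.filter (fun χ => Satisfiable Logic.K (Form.and χ φ)), ?_, ?_⟩
  · intro χ hχ
    rw [Finset.mem_coe, Finset.mem_filter, Set.Finite.mem_toFinset] at hχ
    exact hχ.1
  · intro M hM w
    rw [Form.biimp, sat_and, Form.imp, Form.imp, sat_or, sat_or, sat_neg, sat_neg]
    constructor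
    · by_cases h : M.sat w φ
      · right
        rw [sat_bigOr]
        refine ⟨formM P M d w, ?_, formM_sat P M d w⟩
        rw [Finset.mem_filter, Set.Finite.mem_toFinset]
        exact ⟨formM_mem P M d w, M, model_isForK M, w, formM_sat P M d w, h⟩
      · exact Or.inl h
    · by_cases h : M.sat w (bigOr ((NF_finite P d).toFinset.filter
          (fun χ => Satisfiable Logic.K (Form.and χ φ)))); swap
      · exact Or.inl h
      · right
        rw [sat_bigOr] at h
        obtain ⟨χ, hχ, hwχ⟩ := h
        rw [Finset.mem_filter, Set.Finite.mem_toFinset] at hχ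
        obtain ⟨hχNF, M', hM', w', hw'χ, hw'φ⟩ := hχ
        exact (agree P d χ hχNF M' w' M w hw'χ hwχ φ hv hd).1 hw'φ
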